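/- Let v₁ be a nonzero real number and define x(t) = exp(v₁·t), y(t) = t·exp(v₁·t), z(t) = exp(-2v₁·t) for t ∈ ℝ. Then each of x, y, z satisfies the ODE u'''(t) - 3v₁²·u'(t) + 2v₁³·u(t) = 0 for all t ∈ ℝ, the Wronskian is constant with W(x,y,z)(t) = 9v₁² for all t ∈ ℝ, and the triple (x, y, z) satisfies the Tzitzeica curve equation W(x',y',z')(t) = (-2v₁/9) · (W(x,y,z)(t))² for all t ∈ ℝ. -/

import Mathlib

/-- The Wronskian of three functions `x, y, z : ℝ → ℝ`. -/
noncomputable def W3 (x y z : ℝ → ℝ) (t : ℝ) : ℝ :=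
  Matrix.det !![x t, y t, z t;
    deriv x t, deriv y t, deriv z t;
    deriv (deriv x) t, deriv (deriv y) t, deriv (deriv z) t]

noncomputable def x₁₀ (v₁ : ℝ) : ℝ → ℝ := fun t => Real.exp (v₁ * t)
noncomputable def y₁₀ (v₁ : ℝ) : ℝ → ℝ := fun t => t * Real.exp (v₁ * t)
noncomputable def z₁₀ (v₁ : ℝ) : ℝ → ℝ := fun t => Real.exp (-2 * v₁ * t)

lemma hE (a t : ℝ) : HasDerivAt (fun s => Real.exp (a*s)) (a * Real.exp (a*t)) t := by
  simpa [mul_comm] using ((hasDerivAt_id t).const_mul a).exp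

lemma dlin (b c a : ℝ) : deriv (fun t => (b + c*t) * Real.exp (a*t))
    = fun t => ((c + a*b) + (a*c)*t) * Real.exp (a*t) := by
  funext t
  have h : HasDerivAt (fun t => (b + c*t) * Real.exp (a*t))
      (((c + a*b) + (a*c)*t) * Real.exp (a*t)) t := by
    have := ((hasDerivAt_const t b).add ((hasDerivAt_id t).const_mul c)).mul (hE a t)
    refine this.congr_deriv ?_; simp only [Pi.add_apply, id_eq]; ring
  exact h.deriv

theorem stmt_10 (v₁ : ℝ) (hv₁ : v₁ ≠ 0) :
    (∀ t : ℝ, deriv (deriv (deriv (x₁₀ v₁))) t - 3 * v₁ ^ 2 * deriv (x₁₀ v₁) t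
      + 2 * v₁ ^ 3 * x₁₀ v₁ t = 0) ∧
    (∀ t : ℝ, deriv (deriv (deriv (y₁₀ v₁))) t - 3 * v₁ ^ 2 * deriv (y₁₀ v₁) t
      + 2 * v₁ ^ 3 * y₁₀ v₁ t = 0) ∧
    (∀ t : ℝ, deriv (deriv (deriv (z₁₀ v₁))) t - 3 * v₁ ^ 2 * deriv (z₁₀ v₁) t
      + 2 * v₁ ^ 3 * z₁₀ v₁ t = 0) ∧
    (∀ t : ℝ, W3 (x₁₀ v₁) (y₁₀ v₁) (z₁₀ v₁) t = 9 * v₁ ^ 2) ∧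
    (∀ t : ℝ, W3 (deriv (x₁₀ v₁)) (deriv (y₁₀ v₁)) (deriv (z₁₀ v₁)) t
      = (-2 * v₁ / 9) * (W3 (x₁₀ v₁) (y₁₀ v₁) (z₁₀ v₁) t) ^ 2) := by
  set a := v₁
  have hx : x₁₀ v₁ = fun t => (1 + 0*t) * Real.exp (a*t) := by funext t; simp [x₁₀]; exact Or.inl rfl
  have hy : y₁₀ v₁ = fun t => (0 + 1*t) * Real.exp (a*t) := by funext t; simp [y₁₀]; exact Or.inl rfl
  have hz : z₁₀ v₁ = fun t => (1 + 0*t) * Real.exp ((-2*a)*t) := by funext t; simp [z₁₀]; exact Or.inl rfl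
  have hx1 : deriv (x₁₀ v₁) = fun t => (a + 0*t) * Real.exp (a*t) := by
    rw [hx, dlin]; funext t; ring_nf
  have hx2 : deriv (deriv (x₁₀ v₁)) = fun t => (a^2 + 0*t) * Real.exp (a*t) := by
    rw [hx1, dlin]; funext t; ring_nf
  have hx3 : deriv (deriv (deriv (x₁₀ v₁))) = fun t => (a^3 + 0*t) * Real.exp (a*t) := by
    rw [hx2, dlin]; funext t; ring_nf
  have hy1 : deriv (y₁₀ v₁) = fun t => (1 + a*t) * Real.exp (a*t) := by
    rw [hy, dlin]; funext t; ring_nf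
  have hy2 : deriv (deriv (y₁₀ v₁)) = fun t => (2*a + a^2*t) * Real.exp (a*t) := by
    rw [hy1, dlin]; funext t; ring_nf
  have hy3 : deriv (deriv (deriv (y₁₀ v₁))) = fun t => (3*a^2 + a^3*t) * Real.exp (a*t) := by
    rw [hy2, dlin]; funext t; ring_nf
  have hz1 : deriv (z₁₀ v₁) = fun t => (-2*a + 0*t) * Real.exp ((-2*a)*t) := by
    rw [hz, dlin]; funext t; ring_nf
  have hz2 : deriv (deriv (z₁₀ v₁)) = fun t => (4*a^2 + 0*t) * Real.exp ((-2*a)*t) := by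
    rw [hz1, dlin]; funext t; ring_nf
  have hz3 : deriv (deriv (deriv (z₁₀ v₁))) = fun t => (-8*a^3 + 0*t) * Real.exp ((-2*a)*t) := by
    rw [hz2, dlin]; funext t; ring_nf
  have key : ∀ t : ℝ, Real.exp (a*t) * Real.exp (a*t) * Real.exp ((-2*a)*t) = 1 := by
    intro t
    rw [← Real.exp_add, ← Real.exp_add]
    have h : a*t + a*t + -2*a*t = 0 := by ring
    rw [h, Real.exp_zero]
  refine ⟨fun t => ?_, fun t => ?_, fun t => ?_, fun t => ?_, fun t => ?_⟩
  · rw [hx3, hx1, hx]; ring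
  · rw [hy3, hy1, hy]; ring
  · rw [hz3, hz1, hz]; ring
  · simp only [W3]
    rw [hx2, hy2, hz2, hx1, hy1, hz1, hx, hy, hz]
    simp [Matrix.det_fin_three]
    have e : -(2*a*t) = -2*a*t := by ring
    rw [e]
    linear_combination (9*a^2) * key t
  · simp only [W3]
    rw [hx3, hy3, hz3, hx2, hy2, hz2, hx1, hy1, hz1, hx, hy, hz]
    simp [Matrix.det_fin_three]
    have e : -(2*a*t) = -2*a*t := by ring
    rw [e]
    have k := key t
    linear_combination ((36*a^5) * (Real.exp (a*t) * Real.exp (a*t) * Real.exp (-2*a*t) + 1) - 18*a^5*(Real.exp (a*t) * Real.exp (a*t) * Real.exp (-2*a*t) + 2)) * k
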